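/- Let q be a prime power and let F(f,g,h) be a star flock of PG(3,q) (so f, g, h are linearly dependent over GF(q)) whose critical-cone carrier is nonempty, i.e., there exists (a,b,c) ≠ (0,0,0) such that t ↦ a·f(t) + b·g(t) + c·h(t) is a bijection of GF(q). Then F(f,g,h) is equivalent to a flock of the form F(s, g'(s), 0): there exist a field automorphism σ of GF(q), a σ-semilinear bijection T : GF(q)⁴ → GF(q)⁴ with T(0,0,0,1) a nonzero scalar multiple of (0,0,0,1) and T mapping the hyperplane {x : x₃ = 0} onto itself, and a function g' : GF(q) → GF(q) with g'(0) = 0, such that the collineation of PG(3,q) induced by T maps the set of planes {π_t : f(t)x₀ + g(t)x₁ + h(t)x₂ − x₃ = 0} onto the set of planes {s·x₀ + g'(s)·x₁ − x₃ = 0 : s ∈ GF(q)}. -/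

import Mathlib

/-- A star flock `F(f,g,h)` of `PG(3,q)` whose critical-cone carrier is
nonempty is equivalent to a flock of the form `F(s, g'(s), 0)`: there is a field
automorphism `σ` of `GF(q)` and a `σ`-semilinear bijection `T` of `GF(q)⁴` fixing the
point `(0:0:0:1)` (i.e. sending `(0,0,0,1)` to a nonzero scalar multiple of itself) and
mapping the hyperplane `x₃ = 0` onto itself, together with `g' : GF(q) → GF(q)` with
`g'(0) = 0`, such that the induced collineation maps the set of planes
`{π_t : f(t)x₀ + g(t)x₁ + h(t)x₂ − x₃ = 0}` onto the set of planes
`{s·x₀ + g'(s)·x₁ − x₃ = 0 : s ∈ GF(q)}` (planes viewed as the corresponding linear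
subspaces of `GF(q)⁴`). -/
theorem stmt_3 (F : Type) [Field F] [Fintype F]
    (f g h : F → F) (hf0 : f 0 = 0) (hg0 : g 0 = 0) (hh0 : h 0 = 0)
    (hinj : Function.Injective (fun t => (f t, g t, h t)))
    (hstar : ∃ v : Fin 4 → F, v ≠ 0 ∧ ∀ t : F, f t * v 0 + g t * v 1 + h t * v 2 - v 3 = 0)
    (hcc : ∃ a b c : F, (a, b, c) ≠ (0, 0, 0) ∧
      Function.Bijective (fun t => a * f t + b * g t + c * h t)) :
    ∃ (σ : F ≃+* F) (T : (Fin 4 → F) → (Fin 4 → F)) (g' : F → F),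
      Function.Bijective T ∧
      (∀ u v : Fin 4 → F, T (u + v) = T u + T v) ∧
      (∀ (lam : F) (v : Fin 4 → F), T (lam • v) = σ lam • T v) ∧
      (∃ mu : F, mu ≠ 0 ∧ T ![0, 0, 0, 1] = mu • ![0, 0, 0, 1]) ∧
      (T '' {x : Fin 4 → F | x 3 = 0} = {x : Fin 4 → F | x 3 = 0}) ∧
      g' 0 = 0 ∧
      {S : Set (Fin 4 → F) | ∃ t : F,
          S = T '' {x : Fin 4 → F | f t * x 0 + g t * x 1 + h t * x 2 - x 3 = 0}} =
        {S : Set (Fin 4 → F) | ∃ s : F,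
          S = {x : Fin 4 → F | s * x 0 + g' s * x 1 - x 3 = 0}} := by
  classical
  obtain ⟨v, hvne, hv⟩ := hstar
  obtain ⟨a, b, c, habc, hbij⟩ := hcc
  have hv3 : v 3 = 0 := by
    have := hv 0
    rw [hf0, hg0, hh0] at this
    simpa using this
  have hvw : ∀ t, f t * v 0 + g t * v 1 + h t * v 2 = 0 := by
    intro t
    have := hv t
    rw [hv3, sub_zero] at this
    exact this
  set uu : Fin 3 → F := ![a, b, c] with huu
  set ww : Fin 3 → F := ![v 0, v 1, v 2] with hww
  have hwwne : ww ≠ 0 := by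
    intro hw
    apply hvne
    funext i
    fin_cases i
    · simpa [hww] using congrFun hw 0
    · simpa [hww] using congrFun hw 1
    · simpa [hww] using congrFun hw 2
    · exact hv3
  -- pair independence
  have hpair : ∀ s t : F, s • uu + t • ww = 0 → s = 0 ∧ t = 0 := by
    intro s t hst
    have h0 : s * a + t * v 0 = 0 := by simpa [huu, hww] using congrFun hst 0
    have h1 : s * b + t * v 1 = 0 := by simpa [huu, hww] using congrFun hst 1
    have h2 : s * c + t * v 2 = 0 := by simpa [huu, hww] using congrFun hst 2
    have hs : s = 0 := by
      obtain ⟨τ, hτ⟩ := hbij.surjective 1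
      simp only at hτ
      have hh : s * (a * f τ + b * g τ + c * h τ) = 0 := by
        linear_combination f τ * h0 + g τ * h1 + h τ * h2 - t * hvw τ
      rw [hτ, mul_one] at hh
      exact hh
    refine ⟨hs, ?_⟩
    rw [hs, zero_smul, zero_add] at hst
    rcases smul_eq_zero.mp hst with ht | hwz
    · exact ht
    · exact absurd hwz hwwne
  -- find r outside the span of uu, ww
  have hspan : Submodule.span F ({uu, ww} : Set (Fin 3 → F)) ≠ ⊤ := by
    intro hT
    have h1 : Module.finrank F (Submodule.span F ({uu, ww} : Set (Fin 3 → F))) ≤ 2 := by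
      refine le_trans (finrank_span_le_card _) ?_
      have : ({uu, ww} : Set (Fin 3 → F)).toFinset ⊆ {uu, ww} := by
        intro x hx
        simpa using hx
      calc ({uu, ww} : Set (Fin 3 → F)).toFinset.card ≤ ({uu, ww} : Finset (Fin 3 → F)).card :=
            Finset.card_le_card this
        _ ≤ 2 := Finset.card_insert_le _ _ |>.trans (by simp)
    rw [hT] at h1
    have h2 : Module.finrank F ((⊤ : Submodule F (Fin 3 → F))) = 3 := by
      rw [finrank_top]
      simp [Module.finrank_fin_fun]
    omega
  have hlt : Submodule.span F ({uu, ww} : Set (Fin 3 → F)) < ⊤ := lt_top_iff_ne_top.mpr hspan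
  obtain ⟨r, -, hrnot⟩ := SetLike.exists_of_lt hlt
  -- the triple uu, r, ww is linearly independent
  have hLI : LinearIndependent F ![uu, r, ww] := by
    rw [Fintype.linearIndependent_iff]
    intro cc hsum
    rw [Fin.sum_univ_three] at hsum
    simp only [Matrix.cons_val_zero, Matrix.cons_val_one, Matrix.head_cons,
      Matrix.cons_val_two, Matrix.tail_cons] at hsum
    by_cases h1 : cc 1 = 0
    · rw [h1, zero_smul, add_zero] at hsum
      have hsum' : cc 0 • uu + cc 2 • ww = 0 := by
        exact hsum
      obtain ⟨e0, e2⟩ := hpair _ _ hsum'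
      intro i
      fin_cases i <;> assumption
    · exfalso
      apply hrnot
      rw [Submodule.mem_span_pair]
      refine ⟨-(cc 0) / cc 1, -(cc 2) / cc 1, ?_⟩
      funext i
      have hi := congrFun hsum i
      simp only [Pi.add_apply, Pi.smul_apply, smul_eq_mul, Pi.zero_apply] at hi ⊢
      rw [div_mul_eq_mul_div, div_mul_eq_mul_div, ← add_div, div_eq_iff h1]
      linear_combination -hi
  have hcard : Fintype.card (Fin 3) = Module.finrank F (Fin 3 → F) := by
    simp [Module.finrank_fin_fun]
  let B : Module.Basis (Fin 3) F (Fin 3 → F) := basisOfLinearIndependentOfCardEqFinrank hLI hcard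
  have hB : ⇑B = ![uu, r, ww] := coe_basisOfLinearIndependentOfCardEqFinrank hLI hcard
  let E : (Fin 3 → F) ≃ₗ[F] (Fin 3 → F) := B.equivFun
  have hEsymm : ∀ y : Fin 3 → F, E.symm y = y 0 • uu + y 1 • r + y 2 • ww := by
    intro y
    show B.equivFun.symm y = _
    rw [Module.Basis.equivFun_symm_apply, Fin.sum_univ_three, hB]
    simp
  have htr : ∀ z : Fin 3 → F, ![z 0, z 1, z 2] = z := by
    intro z; funext j; fin_cases j <;> rfl
  set T : (Fin 4 → F) → (Fin 4 → F) := fun y =>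
    ![E ![y 0, y 1, y 2] 0, E ![y 0, y 1, y 2] 1, E ![y 0, y 1, y 2] 2, y 3] with hT
  set Ti : (Fin 4 → F) → (Fin 4 → F) := fun y =>
    ![E.symm ![y 0, y 1, y 2] 0, E.symm ![y 0, y 1, y 2] 1, E.symm ![y 0, y 1, y 2] 2, y 3]
      with hTidef
  have hTiT : ∀ y, Ti (T y) = y := by
    intro y
    funext i
    fin_cases i <;>
      simp [hT, hTidef, htr (E ![y 0, y 1, y 2]), htr]
  have hTTi : ∀ y, T (Ti y) = y := by
    intro y
    funext i
    fin_cases i <;>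
      simp [hT, hTidef, htr (E.symm ![y 0, y 1, y 2]), htr]
  have hTbij : Function.Bijective T :=
    Function.bijective_iff_has_inverse.mpr ⟨Ti, hTiT, hTTi⟩
  have himg : ∀ A : Set (Fin 4 → F), T '' A = {y | Ti y ∈ A} := by
    intro A
    ext y
    constructor
    · rintro ⟨x, hx, rfl⟩
      simpa [hTiT x] using hx
    · intro hy
      exact ⟨Ti y, hy, hTTi y⟩
  -- coordinates of Ti
  have hTi0 : ∀ y : Fin 4 → F, Ti y 0 = y 0 * a + y 1 * r 0 + y 2 * v 0 := by
    intro y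
    have := congrFun (hEsymm ![y 0, y 1, y 2]) 0
    simp only [Pi.add_apply, Pi.smul_apply, smul_eq_mul] at this
    simpa [hTidef, huu, hww] using this
  have hTi1 : ∀ y : Fin 4 → F, Ti y 1 = y 0 * b + y 1 * r 1 + y 2 * v 1 := by
    intro y
    have := congrFun (hEsymm ![y 0, y 1, y 2]) 1
    simp only [Pi.add_apply, Pi.smul_apply, smul_eq_mul] at this
    simpa [hTidef, huu, hww] using this
  have hTi2 : ∀ y : Fin 4 → F, Ti y 2 = y 0 * c + y 1 * r 2 + y 2 * v 2 := by
    intro y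
    have := congrFun (hEsymm ![y 0, y 1, y 2]) 2
    simp only [Pi.add_apply, Pi.smul_apply, smul_eq_mul] at this
    simpa [hTidef, huu, hww] using this
  have hTi3 : ∀ y : Fin 4 → F, Ti y 3 = y 3 := by
    intro y; simp [hTidef]
  -- plane images
  set φ : F → F := fun t => a * f t + b * g t + c * h t with hφ
  set ψ : F → F := fun t => r 0 * f t + r 1 * g t + r 2 * h t with hψ
  have hplane : ∀ t, T '' {x : Fin 4 → F | f t * x 0 + g t * x 1 + h t * x 2 - x 3 = 0} =
      {y : Fin 4 → F | φ t * y 0 + ψ t * y 1 - y 3 = 0} := by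
    intro t
    rw [himg]
    ext y
    simp only [Set.mem_setOf_eq]
    have key : f t * Ti y 0 + g t * Ti y 1 + h t * Ti y 2 - Ti y 3
        = φ t * y 0 + ψ t * y 1 - y 3 := by
      rw [hTi0, hTi1, hTi2, hTi3, hφ, hψ]
      linear_combination y 2 * hvw t
    rw [key]
  have hφbij : Function.Bijective φ := hbij
  let eφ : F ≃ F := Equiv.ofBijective φ hφbij
  refine ⟨RingEquiv.refl F, T, fun s => ψ (eφ.symm s), hTbij, ?_, ?_, ?_, ?_, ?_, ?_⟩
  · -- additivity
    intro x y
    have hadd3 : ![(x + y) 0, (x + y) 1, (x + y) 2]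
        = ![x 0, x 1, x 2] + ![y 0, y 1, y 2] := by
      funext j; fin_cases j <;> rfl
    funext i
    fin_cases i
    · show E ![(x + y) 0, (x + y) 1, (x + y) 2] 0
        = E ![x 0, x 1, x 2] 0 + E ![y 0, y 1, y 2] 0
      rw [hadd3, map_add]; rfl
    · show E ![(x + y) 0, (x + y) 1, (x + y) 2] 1
        = E ![x 0, x 1, x 2] 1 + E ![y 0, y 1, y 2] 1
      rw [hadd3, map_add]; rfl
    · show E ![(x + y) 0, (x + y) 1, (x + y) 2] 2
        = E ![x 0, x 1, x 2] 2 + E ![y 0, y 1, y 2] 2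
      rw [hadd3, map_add]; rfl
    · rfl
  · -- semilinearity
    intro lam x
    have hsmul3 : ![(lam • x) 0, (lam • x) 1, (lam • x) 2] = lam • ![x 0, x 1, x 2] := by
      funext j; fin_cases j <;> rfl
    funext i
    fin_cases i
    · show E ![(lam • x) 0, (lam • x) 1, (lam • x) 2] 0
        = RingEquiv.refl F lam * E ![x 0, x 1, x 2] 0
      rw [hsmul3, map_smul]; rfl
    · show E ![(lam • x) 0, (lam • x) 1, (lam • x) 2] 1
        = RingEquiv.refl F lam * E ![x 0, x 1, x 2] 1
      rw [hsmul3, map_smul]; rfl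
    · show E ![(lam • x) 0, (lam • x) 1, (lam • x) 2] 2
        = RingEquiv.refl F lam * E ![x 0, x 1, x 2] 2
      rw [hsmul3, map_smul]; rfl
    · rfl
  · -- fixes (0:0:0:1)
    refine ⟨1, one_ne_zero, ?_⟩
    have hz : ![(0 : F), 0, 0] = (0 : Fin 3 → F) := by
      funext j; fin_cases j <;> rfl
    funext i
    fin_cases i <;> simp [hT, hz]
  · -- hyperplane
    rw [himg]
    ext y
    simp [hTi3]
  · -- g' 0 = 0
    show ψ (eφ.symm 0) = 0
    have h0 : eφ.symm 0 = 0 := by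
      rw [Equiv.symm_apply_eq]
      show (0 : F) = φ 0
      simp [hφ, hf0, hg0, hh0]
    rw [h0]
    simp [hψ, hf0, hg0, hh0]
  · -- the plane sets coincide
    ext S
    simp only [Set.mem_setOf_eq]
    constructor
    · rintro ⟨t, rfl⟩
      refine ⟨φ t, ?_⟩
      rw [hplane t]
      have : eφ.symm (φ t) = t := eφ.symm_apply_apply t
      rw [this]
    · rintro ⟨s, rfl⟩
      refine ⟨eφ.symm s, ?_⟩
      rw [hplane (eφ.symm s)]
      have : φ (eφ.symm s) = s := eφ.apply_symm_apply s
      rw [this]
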